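/- Let B_{1,0}, B_{2,0} be elements of a unital associative \mathbb{C}(q)-algebra obtained from elements f_1, f_2, f_{31} satisfying f_1 f_2 - q f_2 f_1 = (q^{-1}-q) f_{31} and f_{31} f_1 - q f_1 f_{31} = (q^{-1}-q) f_2 via B_{i,0} = f_i/(q-q^{-1}). Then B_{1,0}^2 B_{2,0} - [2]\, B_{1,0} B_{2,0} B_{1,0} + B_{2,0} B_{1,0}^2 = -q^{-1} B_{2,0}, where [2] = q + q^{-1}. -/

import Mathlib

/-- The formal variable `q`, as a generator of the field ℂ(q). -/
noncomputable def qgen : RatFunc ℂ := RatFunc.X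

lemma qgen_ne_zero : qgen ≠ 0 := RatFunc.X_ne_zero

lemma qgen_sub_inv_ne_zero : qgen - qgen⁻¹ ≠ 0 := by
  intro h
  have h2 : qgen * qgen = 1 := by
    have he : qgen = qgen⁻¹ := sub_eq_zero.mp h
    calc qgen * qgen = qgen * qgen⁻¹ := by rw [← he]
    _ = 1 := mul_inv_cancel₀ qgen_ne_zero
  have hX : (Polynomial.X : Polynomial ℂ) * Polynomial.X = 1 := by
    apply RatFunc.algebraMap_injective ℂ
    simpa [map_mul, RatFunc.algebraMap_X, qgen] using h2
  have := congrArg (Polynomial.eval 0) hX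
  simp at this

theorem serre_generic {R : Type*} {A : Type*} [Field R] [Ring A] [Algebra R A]
    (q : R) (hq : q ≠ 0) (hs : q - q⁻¹ ≠ 0)
    (f1 f2 f31 B1 B2 : A)
    (h1 : f1 * f2 - q • (f2 * f1) = (q⁻¹ - q) • f31)
    (h2 : f31 * f1 - q • (f1 * f31) = (q⁻¹ - q) • f2)
    (hB1 : B1 = (q - q⁻¹)⁻¹ • f1)
    (hB2 : B2 = (q - q⁻¹)⁻¹ • f2) :
    B1 * B1 * B2 - (q + q⁻¹) • (B1 * B2 * B1) + B2 * (B1 * B1)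
      = (-q⁻¹) • B2 := by
  have e1 : f1 * f2 = q • (f2 * f1) + (q⁻¹ - q) • f31 := by
    rw [← h1]; abel
  have e2 : f31 * f1 = q • (f1 * f31) + (q⁻¹ - q) • f2 := by
    rw [← h2]; abel
  have t1 : f1 * f2 * f1 = q • (f2 * (f1 * f1))
      + ((q⁻¹ - q) * q) • (f1 * f31)
      + ((q⁻¹ - q) * (q⁻¹ - q)) • f2 := by
    rw [e1, add_mul, smul_mul_assoc, smul_mul_assoc, mul_assoc, e2]
    module
  have t2 : f1 * (f1 * f2) = q • (f1 * (f2 * f1)) + (q⁻¹ - q) • (f1 * f31) := by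
    rw [e1, mul_add, mul_smul_comm, mul_smul_comm]
  subst hB1 hB2
  simp only [smul_mul_assoc, mul_smul_comm, smul_smul]
  rw [mul_assoc f1 f1 f2, t2, ← mul_assoc f1 f2 f1, t1]
  have hu : q * q⁻¹ = 1 := mul_inv_cancel₀ hq
  have hc : (q - q⁻¹) * (q - q⁻¹)⁻¹ = 1 := mul_inv_cancel₀ hs
  generalize hU : q⁻¹ = u at hu hc ⊢
  generalize hC : (q - u)⁻¹ = c at hc ⊢
  match_scalars
  · linear_combination (-(c*(c*c))) * hu
  · linear_combination (-(c*(c*c))*(u-q)) * hu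
  · linear_combination (-(u*c)*((q-u)*c+1)) * hc

/-- If `f₁f₂ - q f₂f₁ = (q⁻¹-q) f₃₁` and `f₃₁f₁ - q f₁f₃₁ = (q⁻¹-q) f₂`, and
`B_{i,0} = f_i / (q - q⁻¹)`, then
`B₁₀² B₂₀ - [2] B₁₀ B₂₀ B₁₀ + B₂₀ B₁₀² = -q⁻¹ B₂₀`, where `[2] = q + q⁻¹`. -/
theorem serre_zero_modes {A : Type*} [Ring A] [Algebra (RatFunc ℂ) A]
    (f1 f2 f31 B1 B2 : A)
    (h1 : f1 * f2 - qgen • (f2 * f1) = (qgen⁻¹ - qgen) • f31)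
    (h2 : f31 * f1 - qgen • (f1 * f31) = (qgen⁻¹ - qgen) • f2)
    (hB1 : B1 = (qgen - qgen⁻¹)⁻¹ • f1)
    (hB2 : B2 = (qgen - qgen⁻¹)⁻¹ • f2) :
    B1 * B1 * B2 - (qgen + qgen⁻¹) • (B1 * B2 * B1) + B2 * (B1 * B1)
      = (-qgen⁻¹) • B2 :=
  serre_generic qgen qgen_ne_zero qgen_sub_inv_ne_zero f1 f2 f31 B1 B2 h1 h2 hB1 hB2
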